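/- arXiv:2410.22337 — 2 statements merged into one kernel-verified Lean document; each statement's English description precedes it below -/
import Mathlib

section
/- Let n = 2^k + m, where k, m ∈ ℕ and m ≤ 2^k. Then n·K_n = 2^k·K_{2^k} + m·D_{2^k} + r_k·m·K_m (as functions on G, with the convention 0·K_0 = 0). -/
open MeasureTheory
open scoped ENNReal

noncomputable section

/-- The dyadic group: countable product of `ZMod 2`. -/
abbrev G : Type := ℕ → ZMod 2

instance : TopologicalSpace (ZMod 2) := ⊥
instance : DiscreteTopology (ZMod 2) := ⟨rfl⟩
instance : IsTopologicalAddGroup (ZMod 2) :=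
  { continuous_add := continuous_of_discreteTopology
    continuous_neg := continuous_of_discreteTopology }

instance : MeasurableSpace G := borel G
instance : BorelSpace G := ⟨rfl⟩

/-- The normalized Haar measure on the dyadic group. -/
def haarG : Measure G :=
  Measure.addHaarMeasure ⟨⟨Set.univ, isCompact_univ⟩, by simp⟩

/-- Rademacher functions. -/
def rade (k : ℕ) (x : G) : ℝ := (-1 : ℝ) ^ (x k).val

/-- Walsh–Paley functions. -/
def walsh (n : ℕ) (x : G) : ℝ :=
  ∏ k ∈ Finset.range (n + 1), if n.testBit k then rade k x else 1

/-- Dirichlet kernels. -/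
def Dker (n : ℕ) (x : G) : ℝ := ∑ k ∈ Finset.range n, walsh k x

/-- Fejér kernels. -/
def Fker (n : ℕ) (x : G) : ℝ := (1 / n : ℝ) * ∑ k ∈ Finset.Icc 1 n, Dker k x

/-- Walsh–Fourier coefficients. -/
def fourierCoef (f : G → ℝ) (j : ℕ) : ℝ := ∫ x, f x * walsh j x ∂haarG

/-- Partial sums of the Walsh–Fourier series. -/
def partialSum (f : G → ℝ) (k : ℕ) (x : G) : ℝ :=
  ∑ j ∈ Finset.range k, fourierCoef f j * walsh j x

/-- Fejér means. -/
def fejerMean (n : ℕ) (f : G → ℝ) (x : G) : ℝ :=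
  (1 / n : ℝ) * ∑ k ∈ Finset.Icc 1 n, partialSum f k x

/-- Matrix transform means. -/
def sigmaT (t : ℕ → ℕ → ℝ) (n : ℕ) (f : G → ℝ) (x : G) : ℝ :=
  ∑ k ∈ Finset.Icc 1 n, t k n * partialSum f k x

/-- Matrix transform kernels. -/
def KT (t : ℕ → ℕ → ℝ) (n : ℕ) (x : G) : ℝ :=
  ∑ k ∈ Finset.Icc 1 n, t k n * Dker k x

/-- `Δ t_{k,n} = t_{k,n} - t_{k+1,n}` with convention `t_{n+1,n} = 0`. -/
def deltaT (t : ℕ → ℕ → ℝ) (k n : ℕ) : ℝ :=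
  t k n - (if k + 1 ≤ n then t (k + 1) n else 0)

/-- `|x| = ∑ x_i 2^{-(i+1)}` for `x ∈ G`. -/
def normG (x : G) : ℝ := ∑' i, ((x i).val : ℝ) / 2 ^ (i + 1)

/-- The `L_p` modulus of continuity. -/
def omegaP (p : ℝ≥0∞) (f : G → ℝ) (δ : ℝ) : ℝ≥0∞ :=
  ⨆ (t : G) (_ : normG t < δ), eLpNorm (fun x => f (x + t) - f x) p haarG

/-- Dyadic intervals `I_n` (around `0`). -/
def Iset (n : ℕ) : Set G := {y | ∀ i < n, y i = 0}

/-- `e_t ∈ G`: the `t`-th coordinate is `1`, the rest are `0`. -/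
def eG (t : ℕ) : G := fun i => if i = t then 1 else 0

/-- The order `|n|` of a positive integer: `2^{|n|} ≤ n < 2^{|n|+1}`. -/
def ord (n : ℕ) : ℕ := Nat.log 2 n

lemma walsh_ext (n M : ℕ) (h : n + 1 ≤ M) (x : G) :
    walsh n x = ∏ j ∈ Finset.range M, if n.testBit j then rade j x else 1 := by
  unfold walsh
  apply Finset.prod_subset (Finset.range_subset_range.2 h)
  intro j hj hj'
  simp only [Finset.mem_range] at hj hj'
  have : n.testBit j = false := Nat.testBit_lt_two_pow (by
    calc n < 2 ^ n := (Nat.lt_two_pow_self (n := n))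
    _ ≤ 2 ^ j := Nat.pow_le_pow_right (by norm_num) (by omega))
  simp [this]

lemma testBit_pow_add (k i j : ℕ) (hi : i < 2 ^ k) :
    (2 ^ k + i).testBit j = if j = k then true else i.testBit j := by
  rcases lt_trichotomy j k with h | h | h
  · rw [Nat.testBit_two_pow_add_gt h]
    simp [Nat.ne_of_lt h]
  · subst h
    rw [Nat.testBit_two_pow_add_eq, Nat.testBit_lt_two_pow hi]
    simp
  · have h1 : 2 ^ k + i < 2 ^ j := by
      calc 2 ^ k + i < 2 ^ k + 2 ^ k := by omega
      _ = 2 ^ (k + 1) := by ring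
      _ ≤ 2 ^ j := Nat.pow_le_pow_right (by norm_num) (by omega)
    rw [Nat.testBit_lt_two_pow h1, Nat.testBit_lt_two_pow (by omega)]
    simp [Nat.ne_of_gt h]

lemma walsh_pow_add (k i : ℕ) (hi : i < 2 ^ k) (x : G) :
    walsh (2 ^ k + i) x = rade k x * walsh i x := by
  set M := 2 ^ k + i + 1 with hM
  have hkM : k ∈ Finset.range M := Finset.mem_range.2 (by
    have := Nat.lt_two_pow_self (n := k); omega)
  rw [walsh_ext (2 ^ k + i) M le_rfl x, walsh_ext i M (by omega) x,
    ← Finset.mul_prod_erase _ _ hkM, ← Finset.mul_prod_erase _ _ hkM]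
  rw [testBit_pow_add k i k hi, Nat.testBit_lt_two_pow hi]
  simp only [if_true, Bool.false_eq_true, if_false, one_mul]
  congr 1
  apply Finset.prod_congr rfl
  intro j hj
  have hjk : j ≠ k := (Finset.mem_erase.1 hj).1
  rw [testBit_pow_add k i j hi, if_neg hjk]

lemma Dker_pow_add (k j : ℕ) (hj : j ≤ 2 ^ k) (x : G) :
    Dker (2 ^ k + j) x = Dker (2 ^ k) x + rade k x * Dker j x := by
  unfold Dker
  rw [Finset.sum_range_add, Finset.mul_sum]
  congr 1
  apply Finset.sum_congr rfl
  intro i hi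
  exact walsh_pow_add k i (by simp at hi; omega) x
lemma sum_Icc_one (f : ℕ → ℝ) (n : ℕ) :
    ∑ j ∈ Finset.Icc 1 n, f j = ∑ j ∈ Finset.range n, f (j + 1) := by
  induction n with
  | zero => simp
  | succ n ih => rw [Finset.sum_Icc_succ_top (by omega), ih, Finset.sum_range_succ]

lemma mul_Fker (m : ℕ) (x : G) :
    (m : ℝ) * Fker m x = ∑ j ∈ Finset.range m, Dker (j + 1) x := by
  rcases Nat.eq_zero_or_pos m with h | h
  · simp [h, Fker]
  · unfold Fker
    rw [← mul_assoc, mul_one_div, div_self (by positivity), one_mul, sum_Icc_one]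

theorem statement5 (k m n : ℕ) (hm : m ≤ 2 ^ k) (hn : n = 2 ^ k + m) (x : G) :
    (n : ℝ) * Fker n x =
      (2 : ℝ) ^ k * Fker (2 ^ k) x + (m : ℝ) * Dker (2 ^ k) x
        + rade k x * m * Fker m x := by
  subst hn
  have h2 : ((2 : ℝ) ^ k) = ((2 ^ k : ℕ) : ℝ) := by push_cast; ring
  rw [h2, mul_Fker, mul_assoc, mul_Fker]
  rw [mul_Fker, Finset.sum_range_add]
  have : ∀ j ∈ Finset.range m, Dker (2 ^ k + j + 1) x
      = Dker (2 ^ k) x + rade k x * Dker (j + 1) x := by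
    intro j hj
    have := Dker_pow_add k (j + 1) (by simp at hj; omega) x
    rw [← Nat.add_assoc] at this
    exact this
  rw [Finset.sum_congr rfl this, Finset.sum_add_distrib, ← Finset.mul_sum,
    Finset.sum_const]
  simp
  ring
end
end

section
/- For every n ∈ ℙ and every x ∈ G, n·|K_n(x)| ≤ 3 Σ_{l=0}^{|n|} 2^l K_{2^l}(x). -/
open MeasureTheory
open scoped ENNReal

noncomputable section

section Aux

/-- Auxiliary: `S n x = ∑_{j=1}^n D_j(x)`, in `range` form. -/
def Sker (n : ℕ) (x : G) : ℝ := ∑ j ∈ Finset.range n, Dker (j + 1) x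

lemma Sker_eq_Icc (n : ℕ) (x : G) : Sker n x = ∑ k ∈ Finset.Icc 1 n, Dker k x := by
  have : Finset.Icc 1 n = Finset.Ico 1 (n + 1) := by rw [Finset.Ico_add_one_right_eq_Icc]
  rw [Sker, this, Finset.sum_Ico_eq_sum_range]
  simp only [Nat.add_sub_cancel]
  exact Finset.sum_congr rfl fun i _ => by rw [add_comm]

lemma rade_sq (k : ℕ) (x : G) : rade k x = 1 ∨ rade k x = -1 := by
  rcases Nat.even_or_odd (x k).val with h | h
  · left; simp [rade, h.neg_one_pow]
  · right; simp [rade, h.neg_one_pow]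

lemma walsh_eq_prod {n N : ℕ} (h : n < 2 ^ N) (x : G) :
    walsh n x = ∏ k ∈ Finset.range N, (if n.testBit k then rade k x else 1) := by
  have key : ∀ M, n + 1 ≤ M → N ≤ M →
      (∏ k ∈ Finset.range M, (if n.testBit k then rade k x else 1)) =
      ∏ k ∈ Finset.range N, (if n.testBit k then rade k x else 1) := by
    intro M h1 h2
    refine (Finset.prod_subset (Finset.range_subset_range.2 h2) ?_).symm
    intro k hk hk'
    simp only [Finset.mem_range, not_lt] at hk hk'
    have : n.testBit k = false :=
      Nat.testBit_eq_false_of_lt (lt_of_lt_of_le h (Nat.pow_le_pow_right (by norm_num) hk'))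
    simp [this]
  have key2 : ∀ M, n + 1 ≤ M →
      (∏ k ∈ Finset.range M, (if n.testBit k then rade k x else 1)) =
      ∏ k ∈ Finset.range (n+1), (if n.testBit k then rade k x else 1) := by
    intro M h1
    refine (Finset.prod_subset (Finset.range_subset_range.2 h1) ?_).symm
    intro k hk hk'
    simp only [Finset.mem_range, not_lt] at hk hk'
    have : n.testBit k = false :=
      Nat.testBit_eq_false_of_lt (lt_of_lt_of_le (Nat.lt_two_pow_self (n := n))
        (Nat.pow_le_pow_right (by norm_num) (by omega)))
    simp [this]
  rw [walsh, ← key2 (max (n+1) N) (le_max_left _ _), key (max (n+1) N) (le_max_left _ _) (le_max_right _ _)]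

lemma walsh_two_pow_add {m j : ℕ} (hj : j < 2 ^ m) (x : G) :
    walsh (2 ^ m + j) x = rade m x * walsh j x := by
  have h1 : 2 ^ m + j < 2 ^ (m + 1) := by
    rw [pow_succ]; omega
  have h2 : j < 2 ^ (m + 1) := lt_of_lt_of_le hj (Nat.pow_le_pow_right (by norm_num) (by omega))
  rw [walsh_eq_prod h1 x, walsh_eq_prod h2 x, Finset.prod_range_succ, Finset.prod_range_succ]
  have hbm : (2 ^ m + j).testBit m = true := by
    rw [Nat.testBit_two_pow_add_eq, Nat.testBit_eq_false_of_lt hj]; rfl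
  have hjm : j.testBit m = false := Nat.testBit_eq_false_of_lt hj
  have hlow : ∀ k ∈ Finset.range m, (if (2 ^ m + j).testBit k then rade k x else 1) =
      (if j.testBit k then rade k x else 1) := by
    intro k hk
    rw [Nat.testBit_two_pow_add_gt (Finset.mem_range.1 hk)]
  rw [hbm, hjm, Finset.prod_congr rfl hlow]
  simp [mul_comm]

lemma Dker_two_pow_add {m j : ℕ} (hj : j ≤ 2 ^ m) (x : G) :
    Dker (2 ^ m + j) x = Dker (2 ^ m) x + rade m x * Dker j x := by
  rw [Dker, Finset.sum_range_add]
  rw [Dker, Dker, Finset.mul_sum]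
  congr 1
  refine Finset.sum_congr rfl fun i hi => ?_
  exact walsh_two_pow_add (lt_of_lt_of_le (Finset.mem_range.1 hi) hj) x

lemma Sker_two_pow_add {m j : ℕ} (hj : j ≤ 2 ^ m) (x : G) :
    Sker (2 ^ m + j) x =
      Sker (2 ^ m) x + j * Dker (2 ^ m) x + rade m x * Sker j x := by
  rw [Sker, Sker, Sker, Finset.sum_range_add, Finset.mul_sum]
  have h : ∀ i ∈ Finset.range j, Dker (2 ^ m + i + 1) x
      = Dker (2 ^ m) x + rade m x * Dker (i + 1) x := by
    intro i hi
    have he : 2 ^ m + i + 1 = 2 ^ m + (i + 1) := by omega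
    rw [he]
    exact Dker_two_pow_add (by have := Finset.mem_range.1 hi; omega) x
  rw [Finset.sum_congr rfl h, Finset.sum_add_distrib, Finset.sum_const, Finset.card_range,
    nsmul_eq_mul]
  ring

lemma Dker_one (x : G) : Dker 1 x = 1 := by
  simp [Dker, walsh]

/-- nonnegativity and the comparison `2^m D_{2^m} ≤ 2 S(2^m)`. -/
lemma Q (m : ℕ) (x : G) :
    0 ≤ Dker (2 ^ m) x ∧ 0 ≤ Sker (2 ^ m) x ∧
      (2 : ℝ) ^ m * Dker (2 ^ m) x ≤ 2 * Sker (2 ^ m) x := by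
  induction m with
  | zero =>
    norm_num [Sker, Dker_one]
  | succ m ih =>
    obtain ⟨hD, hS, hDS⟩ := ih
    have hDrec : Dker (2 ^ (m+1)) x = Dker (2 ^ m) x + rade m x * Dker (2 ^ m) x := by
      rw [show 2 ^ (m+1) = 2 ^ m + 2 ^ m by ring]
      exact Dker_two_pow_add le_rfl x
    have hSrec : Sker (2 ^ (m+1)) x =
        Sker (2 ^ m) x + (2 ^ m : ℕ) * Dker (2 ^ m) x + rade m x * Sker (2 ^ m) x := by
      rw [show 2 ^ (m+1) = 2 ^ m + 2 ^ m by ring]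
      exact Sker_two_pow_add le_rfl x
    have hp : (0:ℝ) < 2 ^ m := by positivity
    rcases rade_sq m x with hw | hw
    · rw [hw] at hDrec hSrec
      have hD' : Dker (2 ^ (m+1)) x = 2 * Dker (2 ^ m) x := by rw [hDrec]; ring
      have hS' : Sker (2 ^ (m+1)) x
          = 2 * Sker (2 ^ m) x + (2:ℝ) ^ m * Dker (2 ^ m) x := by
        rw [hSrec]; push_cast; ring
      refine ⟨by linarith, by linarith [mul_nonneg hp.le hD], ?_⟩
      rw [pow_succ, hD', hS']
      nlinarith
    · rw [hw] at hDrec hSrec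
      have hD' : Dker (2 ^ (m+1)) x = 0 := by rw [hDrec]; ring
      have hS' : Sker (2 ^ (m+1)) x = (2:ℝ) ^ m * Dker (2 ^ m) x := by
        rw [hSrec]; push_cast; ring
      refine ⟨by rw [hD'], by rw [hS']; positivity, ?_⟩
      rw [hD', hS']
      nlinarith [mul_nonneg hp.le hD]

lemma Sker_abs_le (x : G) : ∀ n, 1 ≤ n →
    |Sker n x| ≤ 3 * ∑ l ∈ Finset.range (Nat.log 2 n + 1), Sker (2 ^ l) x := by
  intro n
  induction n using Nat.strong_induction_on with
  | _ n ih =>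
    intro hn
    set m := Nat.log 2 n with hm
    have h1 : 2 ^ m ≤ n := Nat.pow_log_le_self 2 (by omega)
    have h2 : n < 2 ^ (m + 1) := Nat.lt_pow_succ_log_self (by norm_num) n
    set k := n - 2 ^ m with hk
    have hkm : k < 2 ^ m := by rw [pow_succ] at h2; omega
    have hnk : n = 2 ^ m + k := by omega
    have hrec := Sker_two_pow_add (le_of_lt hkm) x
    rw [← hnk] at hrec
    obtain ⟨hD, hS, hDS⟩ := Q m x
    have hwabs : |rade m x| = 1 := by rcases rade_sq m x with h | h <;> simp [h]
    have hkD : (k : ℝ) * Dker (2 ^ m) x ≤ 2 * Sker (2 ^ m) x := by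
      calc (k : ℝ) * Dker (2 ^ m) x ≤ (2:ℝ) ^ m * Dker (2 ^ m) x := by
            apply mul_le_mul_of_nonneg_right _ hD
            have : (k : ℝ) ≤ ((2 ^ m : ℕ) : ℝ) := by exact_mod_cast hkm.le
            push_cast at this ⊢; linarith
        _ ≤ 2 * Sker (2 ^ m) x := hDS
    have hmain : |Sker n x| ≤ 3 * Sker (2 ^ m) x + |Sker k x| := by
      rw [hrec]
      calc |Sker (2 ^ m) x + ↑k * Dker (2 ^ m) x + rade m x * Sker k x|
          ≤ |Sker (2 ^ m) x + ↑k * Dker (2 ^ m) x| + |rade m x * Sker k x| := abs_add_le _ _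
        _ ≤ (Sker (2 ^ m) x + ↑k * Dker (2 ^ m) x) + |Sker k x| := by
            rw [abs_mul, hwabs, one_mul]
            have hkD0 : (0:ℝ) ≤ (k : ℝ) * Dker (2 ^ m) x :=
              mul_nonneg (Nat.cast_nonneg k) hD
            rw [abs_of_nonneg (by linarith)]
        _ ≤ 3 * Sker (2 ^ m) x + |Sker k x| := by linarith
    rcases Nat.eq_zero_or_pos k with hk0 | hk1
    · have hS0 : Sker k x = 0 := by rw [hk0]; simp [Sker]
      rw [hS0, abs_zero, add_zero] at hmain
      refine hmain.trans ?_
      have : Sker (2 ^ m) x ≤ ∑ l ∈ Finset.range (m + 1), Sker (2 ^ l) x := by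
        apply Finset.single_le_sum (f := fun l => Sker (2 ^ l) x)
          (fun l _ => (Q l x).2.1) (Finset.self_mem_range_succ m)
      linarith
    · have hIH := ih k (by omega) hk1
      have hlog : Nat.log 2 k + 1 ≤ m := by
        have := Nat.log_lt_of_lt_pow (by omega : k ≠ 0) hkm
        omega
      have hsub : ∑ l ∈ Finset.range (Nat.log 2 k + 1), Sker (2 ^ l) x ≤
          ∑ l ∈ Finset.range m, Sker (2 ^ l) x := by
        apply Finset.sum_le_sum_of_subset_of_nonneg
          (Finset.range_subset_range.2 hlog) (fun l _ _ => (Q l x).2.1)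
      have hsplit : ∑ l ∈ Finset.range (m + 1), Sker (2 ^ l) x =
          ∑ l ∈ Finset.range m, Sker (2 ^ l) x + Sker (2 ^ m) x :=
        Finset.sum_range_succ _ m
      linarith

end Aux


theorem statement7 (n : ℕ) (hn : 1 ≤ n) (x : G) :
    (n : ℝ) * |Fker n x| ≤
      3 * ∑ l ∈ Finset.range (ord n + 1), (2 : ℝ) ^ l * Fker (2 ^ l) x := by
  have hF : ∀ m : ℕ, 1 ≤ m → (m : ℝ) * Fker m x = Sker m x := by
    intro m hm
    rw [Fker, Sker_eq_Icc]
    have : (m : ℝ) ≠ 0 := by positivity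
    field_simp
  have hL : (n : ℝ) * |Fker n x| = |Sker n x| := by
    rw [← hF n hn, abs_mul, abs_of_nonneg (by positivity : (0:ℝ) ≤ (n:ℝ))]
  have hR : ∀ l : ℕ, (2 : ℝ) ^ l * Fker (2 ^ l) x = Sker (2 ^ l) x := by
    intro l
    have := hF (2 ^ l) (Nat.one_le_two_pow)
    push_cast at this
    exact this
  rw [hL, Finset.sum_congr rfl (fun l _ => hR l)]
  exact Sker_abs_le x n hn
end
end
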